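/- Let T ≥ 1, β^[t] ∈ ℝ and γ^[t] > 0 for t = 1,…,T, and ε_i > 0 for i = 1,…,n. Set S = Σ_{j=1}^n 1/ε_j, z^[t] = 1 + 2 γ^[t] S, C = Σ_{k=1}^T 1/z^[k], and d_i^[t]* = (Σ_{k=1}^T (β^[k] − β^[t])/z^[k]) / (ε_i z^[t] C). Then d* maximizes the aggregate profit F(d) = Σ_{t=1}^T [ −β^[t] Σ_i d_i^[t] − γ^[t] (Σ_i d_i^[t])² − Σ_i (ε_i/2)(d_i^[t])² ] over all d ∈ ℝ^{n×T} satisfying Σ_{t=1}^T d_i^[t] = 0 for every i. -/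

import Mathlib

/-- the multi-period grand-coalition solution `d*` maximizes the
aggregate profit
`F(d) = ∑ₜ [ −βₜ ∑ᵢ d i t − γₜ (∑ᵢ d i t)² − ∑ᵢ (εᵢ/2)(d i t)² ]`
over all profiles satisfying the zero-net-energy constraints. -/
theorem gc_multiperiod_optimal (T n : ℕ) (hT : 1 ≤ T) (hn : 1 ≤ n)
    (β : Fin T → ℝ) (γ : Fin T → ℝ) (hγ : ∀ t, 0 < γ t)
    (ε : Fin n → ℝ) (hε : ∀ i, 0 < ε i)
    (S : ℝ) (hS : S = ∑ j, 1 / ε j)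
    (z : Fin T → ℝ) (hz : ∀ t, z t = 1 + 2 * γ t * S)
    (C : ℝ) (hC : C = ∑ k, 1 / z k)
    (dstar : Fin n → Fin T → ℝ)
    (hdstar : ∀ i t, dstar i t = (∑ k, (β k - β t) / z k) / (ε i * z t * C))
    (F : (Fin n → Fin T → ℝ) → ℝ)
    (hF : ∀ d : Fin n → Fin T → ℝ,
      F d = ∑ t, (-(β t) * (∑ i, d i t) - γ t * (∑ i, d i t) ^ 2
        - ∑ i, ε i / 2 * (d i t) ^ 2)) :
    (∀ i, ∑ t, dstar i t = 0) ∧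
    (∀ d : Fin n → Fin T → ℝ, (∀ i, ∑ t, d i t = 0) → F d ≤ F dstar) := by
  have hne : (Finset.univ : Finset (Fin n)).Nonempty := by
    simpa [Finset.univ_nonempty_iff] using Fin.pos_iff_nonempty.mp hn
  have hTe : (Finset.univ : Finset (Fin T)).Nonempty := by
    simpa [Finset.univ_nonempty_iff] using Fin.pos_iff_nonempty.mp hT
  have hSpos : 0 < S := by
    rw [hS]
    exact Finset.sum_pos (fun j _ => one_div_pos.mpr (hε j)) hne
  have hzpos : ∀ t, 0 < z t := fun t => by
    rw [hz]; nlinarith [hγ t]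
  have hCpos : 0 < C := by
    rw [hC]
    exact Finset.sum_pos (fun k _ => one_div_pos.mpr (hzpos k)) hTe
  set B := ∑ k, β k / z k with hB
  have hnum : ∀ t, (∑ k, (β k - β t) / z k) = B - β t * C := by
    intro t
    rw [hB, hC, Finset.mul_sum, ← Finset.sum_sub_distrib]
    refine Finset.sum_congr rfl fun k _ => ?_
    have := (hzpos k).ne'
    field_simp
  have hds : ∀ i t, dstar i t = (B - β t * C) / (ε i * z t * C) := by
    intro i t; rw [hdstar, hnum]
  have hstep : ∀ i t, dstar i t = (1 / ε i) * ((B - β t * C) / (z t * C)) := by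
    intro i t
    rw [hds, one_div_mul_eq_div, div_div]
    congr 1
    ring
  have wsum : ∑ t, (B - β t * C) / (z t * C) = 0 := by
    have h : ∀ t : Fin T, (B - β t * C) / (z t * C)
        = (B / C) * (1 / z t) - β t / z t := by
      intro t
      have h1 := (hzpos t).ne'
      have h2 := hCpos.ne'
      field_simp
    rw [Finset.sum_congr rfl fun t _ => h t, Finset.sum_sub_distrib,
      ← Finset.mul_sum, ← hC, ← hB]
    field_simp
    ring
  -- feasibility of dstar
  have feas : ∀ i, ∑ t, dstar i t = 0 := by
    intro i
    rw [Finset.sum_congr rfl fun t _ => hstep i t, ← Finset.mul_sum, wsum,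
      mul_zero]
  -- sum of dstar over i
  have hsum_dstar : ∀ t, (∑ j, dstar j t) = S * ((B - β t * C) / (z t * C)) := by
    intro t
    rw [hS, Finset.sum_mul]
    exact Finset.sum_congr rfl fun j _ => hstep j t
  -- stationarity: gradient at dstar is constant -B/C
  have hstat : ∀ i t, β t + 2 * γ t * (∑ j, dstar j t) + ε i * dstar i t = B / C := by
    intro i t
    rw [hsum_dstar, hds, hz t]
    have h1 : (1 : ℝ) + 2 * γ t * S ≠ 0 := by nlinarith [hγ t]
    have h2 := hCpos.ne'
    have h3 := (hε i).ne'
    field_simp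
    ring
  refine ⟨feas, fun d hd => ?_⟩
  -- per-period quadratic expansion
  have key : ∀ t,
      (-(β t) * (∑ i, d i t) - γ t * (∑ i, d i t) ^ 2 - ∑ i, ε i / 2 * (d i t) ^ 2)
      = (-(β t) * (∑ i, dstar i t) - γ t * (∑ i, dstar i t) ^ 2
          - ∑ i, ε i / 2 * (dstar i t) ^ 2)
        + (-(B / C)) * (∑ i, (d i t - dstar i t))
        - (γ t * (∑ i, (d i t - dstar i t)) ^ 2
          + ∑ i, ε i / 2 * (d i t - dstar i t) ^ 2) := by
    intro t
    have hA : (∑ i, d i t) = (∑ i, dstar i t) + (∑ i, (d i t - dstar i t)) := by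
      rw [← Finset.sum_add_distrib]
      simp
    have hq : (∑ i, ε i / 2 * (d i t) ^ 2)
        = (∑ i, ε i / 2 * (dstar i t) ^ 2)
          + (∑ i, (ε i * dstar i t) * (d i t - dstar i t))
          + (∑ i, ε i / 2 * (d i t - dstar i t) ^ 2) := by
      rw [← Finset.sum_add_distrib, ← Finset.sum_add_distrib]
      exact Finset.sum_congr rfl fun i _ => by ring
    have hlin : (∑ i, (ε i * dstar i t) * (d i t - dstar i t))
        = (B / C - β t - 2 * γ t * (∑ j, dstar j t)) * (∑ i, (d i t - dstar i t)) := by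
      rw [Finset.mul_sum]
      refine Finset.sum_congr rfl fun i _ => ?_
      have h := hstat i t
      have h' : ε i * dstar i t = B / C - β t - 2 * γ t * (∑ j, dstar j t) := by
        linarith
      rw [h']
    rw [hq, hlin, hA]
    ring
  -- sum the expansion over t
  have hFd : F d = F dstar + (-(B / C)) * (∑ t, ∑ i, (d i t - dstar i t))
      - ∑ t, (γ t * (∑ i, (d i t - dstar i t)) ^ 2
        + ∑ i, ε i / 2 * (d i t - dstar i t) ^ 2) := by
    rw [hF d, hF dstar, Finset.mul_sum, ← Finset.sum_add_distrib,
      ← Finset.sum_sub_distrib]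
    exact Finset.sum_congr rfl fun t _ => key t
  have hzero : (∑ t, ∑ i, (d i t - dstar i t)) = 0 := by
    rw [Finset.sum_comm]
    refine Finset.sum_eq_zero fun i _ => ?_
    rw [Finset.sum_sub_distrib, hd i, feas i]
    ring
  have hnonneg : 0 ≤ ∑ t, (γ t * (∑ i, (d i t - dstar i t)) ^ 2
      + ∑ i, ε i / 2 * (d i t - dstar i t) ^ 2) := by
    refine Finset.sum_nonneg fun t _ => ?_
    have h1 : 0 ≤ γ t * (∑ i, (d i t - dstar i t)) ^ 2 :=
      mul_nonneg (hγ t).le (sq_nonneg _)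
    have h2 : 0 ≤ ∑ i, ε i / 2 * (d i t - dstar i t) ^ 2 :=
      Finset.sum_nonneg fun i _ =>
        mul_nonneg (by linarith [hε i]) (sq_nonneg _)
    linarith
  rw [hFd, hzero]
  linarith
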